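/- Ski-rental bound for the exponential threshold distribution: let r ≥ 0 and g > 0 be real numbers, and define cost : ℝ → ℝ by cost(θ) := θ + g if θ < r and cost(θ) := r if θ ≥ r. Then ∫_0^1 cost(g·ln(1 + (e−1)u)) du ≤ (e/(e−1))·min{r, g}. -/

import Mathlib

open MeasureTheory intervalIntegral Real Set

theorem ski_rental_exponential_threshold
    (r g : ℝ) (hr : 0 ≤ r) (hg : 0 < g)
    (cost : ℝ → ℝ)
    (hcost : ∀ θ : ℝ, cost θ = if θ < r then θ + g else r) :
    (∫ u in (0 : ℝ)..1, cost (g * Real.log (1 + (Real.exp 1 - 1) * u)))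
      ≤ Real.exp 1 / (Real.exp 1 - 1) * min r g := by
  have hc : cost = fun θ => if θ < r then θ + g else r := funext hcost
  subst hc
  have h1e : (1:ℝ) < Real.exp 1 := by
    have := Real.exp_one_gt_d9; linarith
  set E := Real.exp 1 - 1 with hE
  have hE0 : 0 < E := by rw [hE]; linarith
  set t := min r g with htdef
  have ht0 : 0 ≤ t := le_min hr hg.le
  have htr : t ≤ r := min_le_left _ _
  have htg : t ≤ g := min_le_right _ _
  set X := Real.exp (t / g) with hXdef
  have hX1 : 1 ≤ X := Real.one_le_exp (by positivity)
  have hXe : X ≤ Real.exp 1 := Real.exp_le_exp.mpr ((div_le_one hg).mpr htg)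
  set c := (X - 1) / E with hcdef
  have hc0 : 0 ≤ c := div_nonneg (by linarith) hE0.le
  have hc1 : c ≤ 1 := by
    rw [hcdef, div_le_one hE0]; simp [hE]; linarith
  have hEc : E * c + 1 = X := by
    rw [hcdef, mul_div_assoc', mul_div_cancel_left₀ _ hE0.ne']; ring
  -- key monotonicity fact
  have hkey : ∀ u : ℝ, 0 ≤ u → (g * Real.log (1 + E * u) < t ↔ u < c) := by
    intro u hu
    have hx : 0 < 1 + E * u := by nlinarith
    rw [mul_comm, ← lt_div_iff₀ hg, Real.log_lt_iff_lt_exp hx, ← hXdef, hcdef, lt_div_iff₀ hE0]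
    constructor <;> intro h <;> nlinarith
  set F : ℝ → ℝ := fun u => if g * Real.log (1 + E * u) < r then g * Real.log (1 + E * u) + g else r with hF
  set G : ℝ → ℝ := fun u => g * Real.log (1 + E * u) + g with hG
  show (∫ u in (0:ℝ)..1, F u) ≤ Real.exp 1 / E * t
  -- pointwise identifications
  have hAeq : ∀ u ∈ Set.uIoc (0:ℝ) c, u ≠ c → F u = G u := by
    intro u hu hne
    rw [uIoc_of_le hc0] at hu
    have huc : u < c := lt_of_le_of_ne hu.2 hne
    have : g * Real.log (1 + E * u) < t := (hkey u hu.1.le).mpr huc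
    simp only [hF, hG, if_pos (lt_of_lt_of_le this htr)]
  have hB : ∀ u ∈ Set.uIoc c (1:ℝ), F u = r := by
    intro u hu
    rw [uIoc_of_le hc1] at hu
    have hu0 : 0 ≤ u := le_trans hc0 hu.1.le
    have hnlt : ¬ g * Real.log (1 + E * u) < t := by
      rw [hkey u hu0]; exact not_lt.mpr hu.1.le
    simp only [hF]
    rw [if_neg]
    intro hlt
    have htlt : t < r := lt_of_le_of_lt (not_lt.mp hnlt) hlt
    have htg' : t = g := by
      rcases min_cases r g with ⟨h1, h2⟩ | ⟨h1, h2⟩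
      · exact absurd (h1 ▸ htlt) (lt_irrefl r)
      · exact h1
    have : X = Real.exp 1 := by rw [hXdef, htg', div_self hg.ne']
    have hc1' : c = 1 := by rw [hcdef, this, ← hE]; field_simp
    exact absurd (hc1' ▸ hu.1) (not_lt.mpr hu.2)
  have hae : ∀ᵐ u : ℝ, u ≠ c := by
    have hs : {u : ℝ | ¬ u ≠ c} = {c} := by ext u; simp
    rw [ae_iff, hs]; exact Real.volume_singleton
  -- integrability
  have hlogcont : ContinuousOn (fun u : ℝ => Real.log (1 + E * u)) (uIcc (0:ℝ) c) := by
    apply ContinuousOn.log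
    · fun_prop
    · intro x hx
      rw [uIcc_of_le hc0] at hx
      nlinarith [hx.1]
  have hlogint : IntervalIntegrable (fun u : ℝ => Real.log (1 + E * u)) volume 0 c :=
    hlogcont.intervalIntegrable
  have hGint : IntervalIntegrable G volume 0 c := by
    apply IntervalIntegrable.add _ (intervalIntegrable_const (c := g))
    exact hlogint.const_mul g
  have hFint1 : IntervalIntegrable F volume 0 c := by
    apply hGint.congr_ae
    filter_upwards [ae_restrict_of_ae hae, ae_restrict_mem measurableSet_uIoc] with u hne hmem
    exact (hAeq u hmem hne).symm
  have hFint2 : IntervalIntegrable F volume c 1 := by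
    apply (intervalIntegrable_const (c := r)).congr_ae
    filter_upwards [ae_restrict_mem measurableSet_uIoc] with u hmem
    exact (hB u hmem).symm
  rw [← integral_add_adjacent_intervals hFint1 hFint2]
  have e1 : (∫ u in (0:ℝ)..c, F u) = ∫ u in (0:ℝ)..c, G u :=
    integral_congr_ae (hae.mono fun u hne hmem => hAeq u hmem hne)
  have e2 : (∫ u in c..(1:ℝ), F u) = (1 - c) * r := by
    rw [integral_congr_ae (Filter.Eventually.of_forall hB), intervalIntegral.integral_const, smul_eq_mul]
  have e3 : (∫ u in (0:ℝ)..c, Real.log (1 + E * u)) = E⁻¹ * (X * (t/g) - X + 1) := by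
    have : (∫ u in (0:ℝ)..c, Real.log (1 + E * u)) = ∫ u in (0:ℝ)..c, Real.log (E * u + 1) :=
      integral_congr fun u _ => by rw [add_comm]
    rw [this, integral_comp_mul_add Real.log hE0.ne' 1]
    rw [mul_zero, zero_add, hEc]
    rw [integral_log]
    rw [hXdef, Real.log_exp, Real.log_one, ← hXdef]
    rw [smul_eq_mul]; ring
  have e4 : (∫ u in (0:ℝ)..c, G u) = g * (E⁻¹ * (X * (t/g) - X + 1)) + g * c := by
    simp only [hG]
    rw [intervalIntegral.integral_add (hlogint.const_mul g) (intervalIntegrable_const (c := g)),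
      intervalIntegral.integral_const_mul, e3, intervalIntegral.integral_const, smul_eq_mul, sub_zero, mul_comm c g]
  rw [e1, e2, e4]
  apply le_of_eq
  have hEe : Real.exp 1 = E + 1 := by rw [hE]; ring
  rcases le_total r g with h | h
  · have htr' : t = r := min_eq_left h
    rw [htr', hcdef, hEe]
    field_simp
    ring
  · have htg' : t = g := min_eq_right h
    have hXE : X = E + 1 := by rw [hXdef, htg', div_self hg.ne', hEe]
    rw [htg', hcdef, hXE, hEe]
    field_simp
    ring
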